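/- The number of rational points over F_p(t) of the curves X_a: y^2 = x(x^r+1)(x^r+a^r) is unbounded as a varies in F_p(t) \ F_p; i.e., for every N there is a non-constant a such that X_a has more than N rational points. -/

import Mathlib

lemma aux_dvd (a m : ℕ) (hm : Odd m) : (a + 1) ∣ (a ^ m + 1) := by
  have h : ((a : ℤ) + 1) ∣ ((a : ℤ) ^ m + 1) := by
    have := sub_dvd_pow_sub_pow (a : ℤ) (-1) m
    simpa [hm.neg_one_pow, sub_neg_eq_add] using this
  exact_mod_cast h

lemma aux_pow_inj {K : Type*} [Field K] {a b : ℕ}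
    (h : (RatFunc.X : RatFunc K) ^ a = RatFunc.X ^ b) : a = b := by
  have hX : (RatFunc.X : RatFunc K) = algebraMap (Polynomial K) (RatFunc K) Polynomial.X :=
    (RatFunc.algebraMap_X).symm
  rw [hX, ← map_pow, ← map_pow] at h
  have := IsFractionRing.injective (Polynomial K) (RatFunc K) h
  have := congrArg Polynomial.natDegree this
  simpa using this

theorem stmt6 (p : ℕ) [Fact p.Prime] (hp : 3 < p) (r : ℕ) (hr : Odd r)
    (hrp : Nat.Coprime r p) (N : ℕ) :
    ∃ a : RatFunc (ZMod p),
      a ∉ Set.range (algebraMap (ZMod p) (RatFunc (ZMod p))) ∧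
      ∃ S : Finset (RatFunc (ZMod p) × RatFunc (ZMod p)),
        N < S.card ∧
        ∀ q ∈ S, q.2 ^ 2 = q.1 * (q.1 ^ r + 1) * (q.1 ^ r + a ^ r) := by
  classical
  have pp : p.Prime := Fact.out
  haveI : CharP (RatFunc (ZMod p)) p := charP_of_injective_algebraMap' (ZMod p) p
  obtain ⟨m, hm⟩ := hr
  have hpodd : Odd p := pp.odd_of_ne_two (by omega)
  set X : RatFunc (ZMod p) := RatFunc.X with hXdef
  set M : ℕ := p ^ 3 ^ N + 1 with hMdef
  have hM0 : 0 < M := by positivity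
  set d : ℕ → ℕ := fun j => p ^ 3 ^ j + 1 with hddef
  set e : ℕ → ℕ := fun j => M / d j with hedef
  set u : ℕ → ℕ := fun j => d j / 2 with hudef
  have hdvd : ∀ j, j ≤ N → d j ∣ M := by
    intro j hj
    have h1 : p ^ 3 ^ N = (p ^ 3 ^ j) ^ 3 ^ (N - j) := by
      rw [← pow_mul, ← pow_add, Nat.add_sub_cancel' hj]
    rw [hMdef, h1]
    exact aux_dvd _ _ (Odd.pow (by decide))
  have he : ∀ j, j ≤ N → e j * d j = M := fun j hj => Nat.div_mul_cancel (hdvd j hj)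
  have hu : ∀ j, u j * 2 = d j := by
    intro j
    refine Nat.div_mul_cancel ?_
    have h := hpodd.pow (n := 3 ^ j)
    obtain ⟨c, hc⟩ := h
    simp only [hddef]
    omega
  have he0 : ∀ j, j ≤ N → 0 < e j := by
    intro j hj
    rcases Nat.eq_zero_or_pos (e j) with h | h
    · exfalso; have := he j hj; rw [h] at this; omega
    · exact h
  set P : ℕ → RatFunc (ZMod p) × RatFunc (ZMod p) :=
    fun j => (X ^ e j, X ^ (e j * (m + 1)) * (1 + X ^ (e j * r)) ^ u j) with hPdef
  refine ⟨X ^ M, ?_, (Finset.range (N + 1)).image P, ?_, ?_⟩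
  · rintro ⟨c, hc⟩
    have hc' : algebraMap (Polynomial (ZMod p)) (RatFunc (ZMod p)) (Polynomial.C c)
        = algebraMap (Polynomial (ZMod p)) (RatFunc (ZMod p)) (Polynomial.X ^ M) := by
      rw [RatFunc.algebraMap_C, map_pow, RatFunc.algebraMap_X]
      rw [RatFunc.algebraMap_eq_C] at hc
      exact hc
    have h2 := IsFractionRing.injective (Polynomial (ZMod p)) (RatFunc (ZMod p)) hc'
    have h3 := congrArg Polynomial.natDegree h2
    simp at h3
  · have hinj : Set.InjOn P (Finset.range (N + 1)) := by
      intro j1 h1 j2 h2 hP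
      simp only [Finset.coe_range, Set.mem_Iio] at h1 h2
      have hx : X ^ e j1 = X ^ e j2 := congrArg Prod.fst hP
      have hee : e j1 = e j2 := aux_pow_inj hx
      have k1 := he j1 (by omega)
      have k2 := he j2 (by omega)
      rw [hee] at k1
      have hd : d j1 = d j2 :=
        Nat.eq_of_mul_eq_mul_left (he0 j2 (by omega))
          (k1.trans k2.symm)
      have h3 : (3:ℕ) ^ j1 = 3 ^ j2 := by
        have hpp : p ^ 3 ^ j1 = p ^ 3 ^ j2 := by
          have := hd
          simp only [hddef] at this
          omega
        exact Nat.pow_right_injective pp.two_le hpp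
      have := Nat.pow_right_injective (by norm_num : 2 ≤ 3) h3
      omega
    rw [Finset.card_image_of_injOn hinj, Finset.card_range]
    omega
  · intro q hq
    simp only [Finset.mem_image, Finset.mem_range] at hq
    obtain ⟨j, hj, rfl⟩ := hq
    have hj' : j ≤ N := by omega
    simp only [hPdef]
    rw [← pow_mul]
    set w : RatFunc (ZMod p) := X ^ (e j * r) with hwdef
    have hMr : M * r = e j * r + e j * r * p ^ 3 ^ j := by
      have := he j hj'
      rw [← this]; simp only [hddef]; ring
    have h1 : (X ^ M) ^ r = w * w ^ p ^ 3 ^ j := by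
      rw [hwdef, ← pow_mul, hMr, pow_add, pow_mul X (e j * r)]
    have hfrob : (1 + w) ^ p ^ 3 ^ j = 1 + w ^ p ^ 3 ^ j := by
      rw [add_pow_char_pow, one_pow]
    have h2 : w + (X ^ M) ^ r = w * (1 + w) ^ p ^ 3 ^ j := by
      rw [h1, hfrob]; ring
    calc (X ^ (e j * (m + 1)) * (1 + w) ^ u j) ^ 2
        = X ^ (e j * (m + 1) * 2) * (1 + w) ^ (u j * 2) := by
          rw [mul_pow, ← pow_mul, ← pow_mul]
      _ = X ^ (e j + e j * r) * (1 + w) ^ (p ^ 3 ^ j + 1) := by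
          have h3 : e j * (m + 1) * 2 = e j + e j * r := by rw [hm]; ring
          have h4 : u j * 2 = p ^ 3 ^ j + 1 := by
            have := hu j; simp only [hddef] at this; exact this
          rw [h3, h4]
      _ = X ^ e j * (w + 1) * (w * (1 + w) ^ p ^ 3 ^ j) := by
          rw [pow_add, ← hwdef, pow_succ]; ring
      _ = X ^ e j * (w + 1) * (w + (X ^ M) ^ r) := by rw [h2]
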